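/- Let p be an odd prime and let G be a finite group of order p^k and nilpotency class 2 whose commutator subgroup has exponent p^t. Then for every natural number i with i < t, the set {x ∈ G | x^{p^i} ∈ Z(G)} is strictly contained in the set {x ∈ G | x^{p^{i+1}} ∈ Z(G)}. (These sets are the centers of the groups S_n^i(G) and S_n^{i+1}(G) with n = (p−1)/2; hence no two terms of the string of G are isomorphic.) -/

import Mathlib

open scoped commutatorElement

/-- Let `p` be an odd prime and `G` a finite group of order `p^k` and
nilpotency class 2 (nonabelian with commutator subgroup contained in the center) whose
commutator subgroup has exponent `p^t`. Then for every `i < t`, the set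
`{x | x^(p^i) ∈ Z(G)}` is strictly contained in `{x | x^(p^(i+1)) ∈ Z(G)}`. -/
theorem stmt_10 {G : Type*} [Group G] [Finite G]
    (p k t : ℕ) (hp : p.Prime) (hodd : Odd p)
    (hcard : Nat.card G = p ^ k)
    (hclass : commutator G ≤ Subgroup.center G)
    (hnonab : commutator G ≠ ⊥)
    (hexp : Monoid.exponent ↥(commutator G) = p ^ t)
    (i : ℕ) (hi : i < t) :
    {x : G | x ^ (p ^ i) ∈ Subgroup.center G} ⊂
      {x : G | x ^ (p ^ (i + 1)) ∈ Subgroup.center G} := by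
  -- every commutator is central
  have hcent : ∀ a y : G, ⁅a, y⁆ ∈ Subgroup.center G := fun a y =>
    hclass (by
      rw [commutator_def]
      exact Subgroup.commutator_mem_commutator (Subgroup.mem_top a) (Subgroup.mem_top y))
  have hcomm : ∀ (a y z : G), Commute z ⁅a, y⁆ := fun a y z =>
    (Subgroup.mem_center_iff.mp (hcent a y) z)
  -- membership in the center via commutators
  have hcenter : ∀ g : G, g ∈ Subgroup.center G ↔ ∀ y : G, ⁅g, y⁆ = 1 := by
    intro g
    rw [Subgroup.mem_center_iff]
    constructor
    · intro h y
      rw [commutatorElement_eq_one_iff_mul_comm]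
      exact (h y).symm
    · intro h y
      exact ((commutatorElement_eq_one_iff_mul_comm.mp (h y))).symm
  -- key: commutators are "linear" in powers
  have key : ∀ (a y : G) (m : ℕ), ⁅a ^ m, y⁆ = ⁅a, y⁆ ^ m := by
    intro a y m
    induction m with
    | zero => simp
    | succ n ih =>
      have hgen : ⁅a * a ^ n, y⁆ = a * ⁅a ^ n, y⁆ * a⁻¹ * ⁅a, y⁆ := by
        simp only [commutatorElement_def]
        group
      have h1 : Commute a (⁅a, y⁆ ^ n) := (hcomm a y a).pow_right n
      calc ⁅a ^ (n + 1), y⁆ = ⁅a * a ^ n, y⁆ := by rw [pow_succ']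
        _ = a * ⁅a ^ n, y⁆ * a⁻¹ * ⁅a, y⁆ := hgen
        _ = a * ⁅a, y⁆ ^ n * a⁻¹ * ⁅a, y⁆ := by rw [ih]
        _ = ⁅a, y⁆ ^ n * a * a⁻¹ * ⁅a, y⁆ := by rw [h1.eq]
        _ = ⁅a, y⁆ ^ (n + 1) := by rw [mul_inv_cancel_right, ← pow_succ]
  -- every element of the commutator subgroup has order dividing p^t
  have hpow_t : ∀ c : G, c ∈ commutator G → c ^ p ^ t = 1 := by
    intro c hcm
    have h := Monoid.pow_exponent_eq_one (⟨c, hcm⟩ : ↥(commutator G))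
    rw [hexp] at h
    have h2 := congrArg (Subtype.val) h
    simpa using h2
  -- there is a commutator of order exactly p^t
  obtain ⟨a, b, hab⟩ : ∃ a b : G, ⁅a, b⁆ ^ p ^ (t - 1) ≠ 1 := by
    by_contra h
    push_neg at h
    have hall : ∀ c : G, c ∈ commutator G → c ^ p ^ (t - 1) = 1 := by
      intro c hcm
      rw [commutator_eq_closure] at hcm
      induction hcm using Subgroup.closure_induction with
      | mem x hx =>
        obtain ⟨g₁, g₂, rfl⟩ := hx
        exact h g₁ g₂
      | one => simp
      | mul x y hx hy ihx ihy =>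
        have hxc : x ∈ Subgroup.center G := hclass (by rwa [commutator_eq_closure])
        have : Commute x y := Subgroup.mem_center_iff.mp hxc y |>.symm
        rw [this.mul_pow, ihx, ihy, one_mul]
      | inv x hx ihx =>
        rw [inv_pow, ihx, inv_one]
    have hdvd : Monoid.exponent ↥(commutator G) ∣ p ^ (t - 1) := by
      apply Monoid.exponent_dvd_of_forall_pow_eq_one
      intro g
      ext
      push_cast
      exact hall g g.2
    rw [hexp] at hdvd
    have := (Nat.pow_dvd_pow_iff_le_right hp.one_lt).mp hdvd
    omega
  rw [Set.ssubset_def]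
  constructor
  · intro x hx
    have : x ^ p ^ (i + 1) = (x ^ p ^ i) ^ p := by
      rw [← pow_mul, ← pow_succ]
    rw [Set.mem_setOf_eq, this]
    exact pow_mem hx p
  · intro hsup
    have hx := hsup (show a ^ p ^ (t - 1 - i) ∈ _ from ?_)
    · -- a ^ p^(t-1-i) would satisfy (·)^(p^i) ∈ center, contradiction
      rw [Set.mem_setOf_eq, ← pow_mul, ← pow_add] at hx
      have heq : t - 1 - i + i = t - 1 := by omega
      rw [heq] at hx
      have := (hcenter _).mp hx b
      rw [key] at this
      exact hab this
    · -- a ^ p^(t-1-i) does satisfy (·)^(p^(i+1)) ∈ center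
      rw [Set.mem_setOf_eq, ← pow_mul, ← pow_add]
      have heq : t - 1 - i + (i + 1) = t := by omega
      rw [heq, hcenter]
      intro y
      rw [key]
      exact hpow_t _ (by
        rw [commutator_def]
        exact Subgroup.commutator_mem_commutator (Subgroup.mem_top a) (Subgroup.mem_top y))
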